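/- For every A ∈ M₂(ℂ), 𝓜(A) = Z^{−1} Σ_{n,σ,n',σ'} e^{iτ(E_{nσ} − E_{n'σ'})} ( a_{nσ} a_{n'σ'} ⟨n|A|n'⟩ + b_{nσ} b_{n'σ'} ⟨1−n|A|1−n'⟩ ) · ( a_{nσ} a_{n'σ'} |n⟩⟨n'| + e^{−βE_E} b_{nσ} b_{n'σ'} |1−n⟩⟨1−n'| ), where the sum runs over n, n' ∈ {0,1} and σ, σ' ∈ {+,−}, and Z = 1 + e^{−βE_E}. -/

import Mathlib

open Matrix
open scoped Kronecker Matrix BigOperators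

noncomputable section

/-- The Hamiltonian of the two-level system `S`. -/
def hamS (ES : ℝ) : Matrix (Fin 2) (Fin 2) ℂ := !![0, 0; 0, (ES : ℂ)]

/-- The Hamiltonian of the two-level system `E`. -/
def hamE (EE : ℝ) : Matrix (Fin 2) (Fin 2) ℂ := !![0, 0; 0, (EE : ℂ)]

/-- The annihilation operator `a` with `a|1⟩ = |0⟩`, `a|0⟩ = 0`. -/
def annOp : Matrix (Fin 2) (Fin 2) ℂ := !![0, 1; 0, 0]

/-- The coupled Hamiltonian `h_λ = h_S ⊗ 1 + 1 ⊗ h_E + λ (a ⊗ a* + a* ⊗ a)`. -/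
def hamLam (ES EE lam : ℝ) : Matrix (Fin 2 × Fin 2) (Fin 2 × Fin 2) ℂ :=
  hamS ES ⊗ₖ 1 + 1 ⊗ₖ hamE EE + (lam : ℂ) • (annOp ⊗ₖ annOpᴴ + annOpᴴ ⊗ₖ annOp)

/-- `ν₀ = √((E_S − E_E)² + 4λ²)`. -/
def nu0 (ES EE lam : ℝ) : ℝ := Real.sqrt ((ES - EE) ^ 2 + 4 * lam ^ 2)

/-- The eigenvalues `E_{nσ}` of `h_λ` (`σ = true` is `+`, `σ = false` is `−`). -/
def eLevel (ES EE lam : ℝ) (n : Fin 2) (σ : Bool) : ℝ :=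
  if n = 0 then (if σ then 0 else ES + EE)
  else ((ES + EE) + (if σ then nu0 ES EE lam else -(nu0 ES EE lam))) / 2

/-- The coefficients `a_{nσ}`. -/
def aCoef (ES EE lam : ℝ) (n : Fin 2) (σ : Bool) : ℝ :=
  if n = 0 then (if σ then 1 else 0)
  else -lam / Real.sqrt (lam ^ 2 + (ES - eLevel ES EE lam 1 σ) ^ 2)

/-- The coefficients `b_{nσ}`. -/
def bCoef (ES EE lam : ℝ) (n : Fin 2) (σ : Bool) : ℝ :=
  if n = 0 then (if σ then 0 else 1)
  else (ES - eLevel ES EE lam 1 σ) / Real.sqrt (lam ^ 2 + (ES - eLevel ES EE lam 1 σ) ^ 2)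

/-- `1 − n` on `{0, 1}`. -/
def flipIdx (n : Fin 2) : Fin 2 := if n = 0 then 1 else 0

-- auxiliary
def sigOf (s : Fin 2) : Bool := if s = 0 then true else false

def Umat (ES EE lam : ℝ) : Matrix (Fin 2 × Fin 2) (Fin 2 × Fin 2) ℂ :=
  Matrix.of fun p q =>
    (if p = (q.1, 0) then ((aCoef ES EE lam q.1 (sigOf q.2) : ℝ) : ℂ) else 0) +
    (if p = (flipIdx q.1, 1) then ((bCoef ES EE lam q.1 (sigOf q.2) : ℝ) : ℂ) else 0)

def dvalq (ES EE lam : ℝ) (q : Fin 2 × Fin 2) : ℝ := eLevel ES EE lam q.1 (sigOf q.2)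

lemma aCoef_zero (ES EE lam : ℝ) (σ : Bool) :
    aCoef ES EE lam 0 σ = if σ then 1 else 0 := by simp [aCoef]

lemma bCoef_zero (ES EE lam : ℝ) (σ : Bool) :
    bCoef ES EE lam 0 σ = if σ then 0 else 1 := by simp [bCoef]

lemma nu0_sq (ES EE lam : ℝ) : nu0 ES EE lam ^ 2 = (ES - EE) ^ 2 + 4 * lam ^ 2 :=
  Real.sq_sqrt (by positivity)

lemma char_eq (ES EE lam : ℝ) (σ : Bool) :
    (ES - eLevel ES EE lam 1 σ) * (EE - eLevel ES EE lam 1 σ) = lam ^ 2 := by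
  cases σ <;> simp [eLevel] <;> linear_combination (nu0_sq ES EE lam) / 4

lemma dprod (ES EE lam : ℝ) :
    (ES - eLevel ES EE lam 1 true) * (ES - eLevel ES EE lam 1 false) = -lam ^ 2 := by
  simp [eLevel]
  linear_combination (-(nu0_sq ES EE lam)) / 4

section
variable (ES EE : ℝ) {lam : ℝ} (hlam : lam ≠ 0)
include hlam

lemma lam_sq_pos : (0:ℝ) < lam ^ 2 :=
  lt_of_le_of_ne (sq_nonneg lam) (Ne.symm (pow_ne_zero 2 hlam))

lemma Npos (σ : Bool) :
    0 < Real.sqrt (lam ^ 2 + (ES - eLevel ES EE lam 1 σ) ^ 2) :=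
  Real.sqrt_pos.2 (by nlinarith [lam_sq_pos hlam, sq_nonneg (ES - eLevel ES EE lam 1 σ)])

lemma Nsq (σ : Bool) :
    Real.sqrt (lam ^ 2 + (ES - eLevel ES EE lam 1 σ) ^ 2) ^ 2
      = lam ^ 2 + (ES - eLevel ES EE lam 1 σ) ^ 2 :=
  Real.sq_sqrt (by positivity)

lemma ab_sq (σ : Bool) :
    aCoef ES EE lam 1 σ ^ 2 + bCoef ES EE lam 1 σ ^ 2 = 1 := by
  have hN := (Npos ES EE hlam σ).ne'
  rw [aCoef, bCoef]
  simp only [if_neg (by decide : ¬(1:Fin 2) = 0)]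
  rw [div_pow, div_pow, ← add_div, Nsq ES EE hlam σ]
  field_simp

lemma ab_orth :
    aCoef ES EE lam 1 true * aCoef ES EE lam 1 false
      + bCoef ES EE lam 1 true * bCoef ES EE lam 1 false = 0 := by
  have h1 := (Npos ES EE hlam true).ne'
  have h2 := (Npos ES EE hlam false).ne'
  rw [aCoef, bCoef, aCoef, bCoef]
  simp only [if_neg (by decide : ¬(1:Fin 2) = 0)]
  rw [div_mul_div_comm, div_mul_div_comm, ← add_div]
  rw [div_eq_zero_iff]
  left
  linear_combination dprod ES EE lam

end

section
variable (ES EE : ℝ) {lam : ℝ} (hlam : lam ≠ 0)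
include hlam

lemma U_unitary : (Umat ES EE lam)ᴴ * Umat ES EE lam = 1 := by
  have h1 := ab_sq ES EE hlam true
  have h2 := ab_sq ES EE hlam false
  have h3 := ab_orth ES EE hlam
  ext p q
  obtain ⟨p1, p2⟩ := p
  obtain ⟨q1, q2⟩ := q
  fin_cases p1 <;> fin_cases p2 <;> fin_cases q1 <;> fin_cases q2 <;>
    simp [Umat, Matrix.mul_apply, Matrix.conjTranspose_apply, Fintype.sum_prod_type,
      Fin.sum_univ_two, Matrix.one_apply, sigOf, flipIdx, Complex.star_def,
      Complex.conj_ofReal, Prod.ext_iff, aCoef_zero, bCoef_zero] <;>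
    norm_cast <;> nlinarith [h1, h2, h3]

end

lemma eLevel_zero (ES EE lam : ℝ) (σ : Bool) :
    eLevel ES EE lam 0 σ = if σ then 0 else ES + EE := by simp [eLevel]

section
variable (ES EE : ℝ) {lam : ℝ} (hlam : lam ≠ 0)
include hlam

lemma eig1 (σ : Bool) :
    EE * bCoef ES EE lam 1 σ + lam * aCoef ES EE lam 1 σ
      = eLevel ES EE lam 1 σ * bCoef ES EE lam 1 σ := by
  have hN := (Npos ES EE hlam σ).ne'
  rw [aCoef, bCoef]
  simp only [if_neg (by decide : ¬(1:Fin 2) = 0)]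
  field_simp
  linear_combination char_eq ES EE lam σ

lemma eig2 (σ : Bool) :
    lam * bCoef ES EE lam 1 σ + ES * aCoef ES EE lam 1 σ
      = eLevel ES EE lam 1 σ * aCoef ES EE lam 1 σ := by
  have hN := (Npos ES EE hlam σ).ne'
  rw [aCoef, bCoef]
  simp only [if_neg (by decide : ¬(1:Fin 2) = 0)]
  field_simp
  ring

lemma heigen :
    hamLam ES EE lam * Umat ES EE lam
      = Umat ES EE lam * Matrix.diagonal (fun q => ((dvalq ES EE lam q : ℝ) : ℂ)) := by
  have h1 := eig1 ES EE hlam true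
  have h2 := eig1 ES EE hlam false
  have h3 := eig2 ES EE hlam true
  have h4 := eig2 ES EE hlam false
  ext p q
  obtain ⟨p1, p2⟩ := p
  obtain ⟨q1, q2⟩ := q
  fin_cases p1 <;> fin_cases p2 <;> fin_cases q1 <;> fin_cases q2 <;>
    simp [hamLam, hamS, hamE, annOp, Umat, dvalq, Matrix.mul_apply,
      Fintype.sum_prod_type, Fin.sum_univ_two, Matrix.one_apply, Matrix.diagonal,
      Matrix.kroneckerMap_apply, sigOf, flipIdx, Prod.ext_iff, aCoef_zero, bCoef_zero,
      eLevel_zero] <;>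
    norm_cast <;> nlinarith [h1, h2, h3, h4]

end

section
variable (ES EE : ℝ) {lam : ℝ} (hlam : lam ≠ 0)
include hlam

lemma U_unitary' : Umat ES EE lam * (Umat ES EE lam)ᴴ = 1 :=
  mul_eq_one_comm.mp (U_unitary ES EE hlam)

lemma hamLam_decomp :
    hamLam ES EE lam
      = Umat ES EE lam * Matrix.diagonal (fun q => ((dvalq ES EE lam q : ℝ) : ℂ))
          * (Umat ES EE lam)ᴴ := by
  calc hamLam ES EE lam = hamLam ES EE lam * (Umat ES EE lam * (Umat ES EE lam)ᴴ) := by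
        rw [U_unitary' ES EE hlam, mul_one]
    _ = (hamLam ES EE lam * Umat ES EE lam) * (Umat ES EE lam)ᴴ := by rw [mul_assoc]
    _ = _ := by rw [heigen ES EE hlam]

lemma exp_hamLam (c : ℂ) :
    NormedSpace.exp (c • hamLam ES EE lam)
      = Umat ES EE lam
          * Matrix.diagonal (fun q => Complex.exp (c * ((dvalq ES EE lam q : ℝ) : ℂ)))
          * (Umat ES EE lam)ᴴ := by
  let Uu : (Matrix (Fin 2 × Fin 2) (Fin 2 × Fin 2) ℂ)ˣ :=
    ⟨Umat ES EE lam, (Umat ES EE lam)ᴴ, U_unitary' ES EE hlam, U_unitary ES EE hlam⟩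
  have h1 : c • hamLam ES EE lam
      = (Uu : Matrix (Fin 2 × Fin 2) (Fin 2 × Fin 2) ℂ)
          * Matrix.diagonal (fun q => c * ((dvalq ES EE lam q : ℝ) : ℂ))
          * ((Uu⁻¹ : (Matrix (Fin 2 × Fin 2) (Fin 2 × Fin 2) ℂ)ˣ)
              : Matrix (Fin 2 × Fin 2) (Fin 2 × Fin 2) ℂ) := by
    show c • hamLam ES EE lam
        = Umat ES EE lam * Matrix.diagonal (fun q => c * ((dvalq ES EE lam q : ℝ) : ℂ))
            * (Umat ES EE lam)ᴴ
    have h2 : Matrix.diagonal (fun q : Fin 2 × Fin 2 => c * ((dvalq ES EE lam q : ℝ) : ℂ))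
        = c • Matrix.diagonal (fun q : Fin 2 × Fin 2 => ((dvalq ES EE lam q : ℝ) : ℂ)) := by
      rw [← Matrix.diagonal_smul]
      rfl
    rw [hamLam_decomp ES EE hlam, h2]
    simp only [Matrix.smul_mul, Matrix.mul_smul]
  rw [h1, Matrix.exp_units_conj]
  have h3 : NormedSpace.exp (fun q : Fin 2 × Fin 2 => c * ((dvalq ES EE lam q : ℝ) : ℂ))
      = fun q : Fin 2 × Fin 2 => Complex.exp (c * ((dvalq ES EE lam q : ℝ) : ℂ)) := by
    funext q
    rw [Pi.coe_exp, ← Complex.exp_eq_exp_ℂ]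
  rw [Matrix.exp_diagonal, h3]
  rfl

end


set_option maxHeartbeats 3200000

/-- Explicit formula for the reduced dynamics map
`𝓜(A) = Tr_E(e^{iτh_λ}(A ⊗ 1)e^{−iτh_λ})` of the spin-spin model. -/
theorem spin_spin_reduced_dynamics_formula
    (ES EE lam β τ : ℝ) (hES : 0 < ES) (hEE : 0 < EE) (hlam : lam ≠ 0)
    (hβ : 0 < β) (hτ : 0 < τ)
    (gβ : Matrix (Fin 2) (Fin 2) ℂ)
    (hgβ : gβ = (Matrix.trace (NormedSpace.exp ((-β : ℂ) • hamE EE)))⁻¹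
      • NormedSpace.exp ((-β : ℂ) • hamE EE))
    -- `Tr_E` is the `g_β`-weighted partial trace over the second factor
    (TrE : Matrix (Fin 2 × Fin 2) (Fin 2 × Fin 2) ℂ →ₗ[ℂ] Matrix (Fin 2) (Fin 2) ℂ)
    (hTrE : ∀ X Y : Matrix (Fin 2) (Fin 2) ℂ, TrE (X ⊗ₖ Y) = Matrix.trace (gβ * Y) • X)
    (MM : Matrix (Fin 2) (Fin 2) ℂ → Matrix (Fin 2) (Fin 2) ℂ)
    (hMM : ∀ A, MM A = TrE (NormedSpace.exp ((Complex.I * (τ : ℂ)) • hamLam ES EE lam)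
      * (A ⊗ₖ 1) * NormedSpace.exp ((-(Complex.I * (τ : ℂ))) • hamLam ES EE lam))) :
    ∀ A : Matrix (Fin 2) (Fin 2) ℂ,
      MM A = ((1 + Real.exp (-β * EE) : ℝ) : ℂ)⁻¹ •
        ∑ n : Fin 2, ∑ σ : Bool, ∑ n' : Fin 2, ∑ σ' : Bool,
          Complex.exp (Complex.I * (τ : ℂ)
              * ((eLevel ES EE lam n σ - eLevel ES EE lam n' σ' : ℝ) : ℂ)) •
            (((aCoef ES EE lam n σ * aCoef ES EE lam n' σ' : ℝ) : ℂ) * A n n'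
              + ((bCoef ES EE lam n σ * bCoef ES EE lam n' σ' : ℝ) : ℂ)
                  * A (flipIdx n) (flipIdx n')) •
            (((aCoef ES EE lam n σ * aCoef ES EE lam n' σ' : ℝ) : ℂ)
                  • Matrix.single n n' (1 : ℂ)
              + ((Real.exp (-β * EE) * bCoef ES EE lam n σ * bCoef ES EE lam n' σ' : ℝ) : ℂ)
                  • Matrix.single (flipIdx n) (flipIdx n') (1 : ℂ)) := by
  intro A
  -- explicit form of `gβ`
  have hherm : ((-β : ℂ)) • hamE EE = Matrix.diagonal ![0, ((-β * EE : ℝ) : ℂ)] := by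
    ext i j
    fin_cases i <;> fin_cases j <;> simp [hamE, Matrix.diagonal] <;> push_cast <;> ring
  have hexpE : NormedSpace.exp ((-β : ℂ) • hamE EE)
      = Matrix.diagonal ![1, ((Real.exp (-β * EE) : ℝ) : ℂ)] := by
    rw [hherm, Matrix.exp_diagonal]
    refine congrArg Matrix.diagonal ?_
    funext i
    rw [Pi.coe_exp, ← Complex.exp_eq_exp_ℂ]
    fin_cases i <;> simp [Complex.ofReal_exp]
  have htr : Matrix.trace (NormedSpace.exp ((-β : ℂ) • hamE EE))
      = ((1 + Real.exp (-β * EE) : ℝ) : ℂ) := by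
    rw [hexpE]
    simp [Matrix.trace, Fin.sum_univ_two, Matrix.diagonal]
    try push_cast
    try ring
  have hgb : gβ = ((1 + Real.exp (-β * EE) : ℝ) : ℂ)⁻¹
      • Matrix.diagonal ![1, ((Real.exp (-β * EE) : ℝ) : ℂ)] := by
    rw [hgβ, htr, hexpE]
  -- closed form of `TrE`
  have hTrE2 : ∀ M : Matrix (Fin 2 × Fin 2) (Fin 2 × Fin 2) ℂ,
      TrE M = Matrix.of fun i k => ((1 + Real.exp (-β * EE) : ℝ) : ℂ)⁻¹ *
        (M (i, 0) (k, 0) + ((Real.exp (-β * EE) : ℝ) : ℂ) * M (i, 1) (k, 1)) := by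
    intro M
    have hdec : M = ∑ i : Fin 2, ∑ j : Fin 2, ∑ k : Fin 2, ∑ l : Fin 2,
        M (i, j) (k, l) • (Matrix.single i k 1 ⊗ₖ Matrix.single j l 1) := by
      ext p q
      obtain ⟨p1, p2⟩ := p
      obtain ⟨q1, q2⟩ := q
      fin_cases p1 <;> fin_cases p2 <;> fin_cases q1 <;> fin_cases q2 <;>
        simp [Matrix.sum_apply, Matrix.kroneckerMap_apply, Matrix.single,
          Fin.sum_univ_two]
    conv_lhs => rw [hdec]
    simp only [map_sum, LinearMap.map_smul, hTrE]
    ext i k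
    rw [hgb]
    fin_cases i <;> fin_cases k <;>
      simp [Matrix.sum_apply, Matrix.trace, Matrix.mul_apply, Matrix.diagonal,
        Matrix.single, Fin.sum_univ_two, Matrix.of_apply] <;> ring
  -- exponential splitting
  have hexpdiff : ∀ x y : ℝ, Complex.exp (Complex.I * (τ : ℂ) * ((x - y : ℝ) : ℂ))
      = Complex.exp (Complex.I * (τ : ℂ) * (x : ℂ))
        * Complex.exp (-(Complex.I * (τ : ℂ)) * (y : ℂ)) := by
    intro x y
    rw [← Complex.exp_add]
    congr 1
    push_cast
    ring
  have hexpdiff' : ∀ x y : ℂ, Complex.exp (Complex.I * (τ : ℂ) * (x - y))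
      = Complex.exp (Complex.I * (τ : ℂ) * x)
        * Complex.exp (-(Complex.I * (τ : ℂ)) * y) := by
    intro x y
    rw [← Complex.exp_add]
    congr 1
    ring
  rw [hMM A, exp_hamLam ES EE hlam (Complex.I * (τ : ℂ)),
    exp_hamLam ES EE hlam (-(Complex.I * (τ : ℂ))), hTrE2]
  ext i k
  fin_cases i <;> fin_cases k <;>
    simp [Matrix.mul_apply, Umat, Matrix.conjTranspose_apply, Fintype.sum_prod_type,
      Fin.sum_univ_two, Fintype.sum_bool, Matrix.sum_apply, Matrix.one_apply,
      Matrix.kroneckerMap_apply, Matrix.single, Matrix.diagonal, dvalq, sigOf,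
      flipIdx, Prod.ext_iff, aCoef_zero, bCoef_zero, eLevel_zero, Complex.star_def,
      Complex.conj_ofReal, hexpdiff, hexpdiff', smul_eq_mul, Matrix.of_apply] <;>
    push_cast <;> (try left) <;> ring

end
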